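/- Let $f : \mathbb{R}^3 \to [0,\infty)$ be measurable with $\|f\|_{L^\infty} \le M$, $\int_{\mathbb{R}^3} f\,dv \le m_0$ and $\int_{\mathbb{R}^3} f(v)(1+|v|^2)\,dv \le m_2$. Then there is a constant $C$, depending only on $M, m_0, m_2$, such that for every $v \ne 0$, $\int_{\mathbb{R}^3} f(v_1)|v - v_1|^{-1}\,dv_1 \le C |v|^{-1}$. -/

import Mathlib

open MeasureTheory Metric

local notation "E3" => EuclideanSpace ℝ (Fin 3)

lemma aux_pow_calc (k : ℕ) : ((1/2:ℝ)^(k+1))⁻¹ * ((1/2:ℝ)^k)^3 = 2 * (1/4:ℝ)^k := by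
  have ha : (0:ℝ) < 2^k := by positivity
  have e1 : ((1/2:ℝ)^(k+1))⁻¹ = 2^(k+1) := by
    rw [one_div, inv_pow, inv_inv]
  have e2 : ((1/2:ℝ)^k)^3 = (((2:ℝ)^k)⁻¹)^3 := by rw [one_div, inv_pow]
  have e3 : (1/4:ℝ)^k = (((2:ℝ)^k)^2)⁻¹ := by
    rw [one_div, inv_pow, ← pow_mul, show (4:ℝ) = 2^2 by norm_num, ← pow_mul, mul_comm 2 k]
  rw [e1, e2, e3, pow_succ]
  field_simp

lemma aux_K_lt_top :
    (∫⁻ u in Metric.ball (0 : E3) 1, ENNReal.ofReal ‖u‖⁻¹) < ⊤ := by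
  classical
  set V : ENNReal := volume (Metric.ball (0 : E3) 1) with hV
  have hVlt : V < ⊤ := measure_ball_lt_top
  set S : ℕ → Set E3 := fun k => Metric.ball 0 ((1/2:ℝ)^k) \ Metric.ball 0 ((1/2:ℝ)^(k+1)) with hS
  -- covering
  have hsub : Metric.ball (0 : E3) 1 ⊆ {(0:E3)} ∪ ⋃ k, S k := by
    intro u hu
    rcases eq_or_ne u 0 with h0 | h0
    · exact Or.inl (by simp [h0])
    · refine Or.inr ?_
      have hupos : 0 < ‖u‖ := norm_pos_iff.2 h0
      have hu1 : ‖u‖ < 1 := by simpa [dist_eq_norm] using hu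
      have hex : ∃ k : ℕ, (1/2:ℝ)^(k+1) ≤ ‖u‖ := by
        obtain ⟨n, hn⟩ := exists_pow_lt_of_lt_one hupos (by norm_num : (1/2:ℝ) < 1)
        exact ⟨n, le_trans (pow_le_pow_of_le_one (by norm_num) (by norm_num) (Nat.le_succ n)) hn.le⟩
      set k := Nat.find hex with hk
      have hk1 : (1/2:ℝ)^(k+1) ≤ ‖u‖ := Nat.find_spec hex
      have hk2 : ‖u‖ < (1/2:ℝ)^k := by
        rcases Nat.eq_zero_or_pos k with h | h
        · simpa [h] using hu1
        · have := Nat.find_min hex (show k - 1 < k by omega)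
          have hkk : k - 1 + 1 = k := by omega
          rw [hkk] at this
          linarith [not_le.1 this]
      exact Set.mem_iUnion.2 ⟨k, by
        simp only [S, Set.mem_diff, Metric.mem_ball, dist_eq_norm, sub_zero]
        exact ⟨hk2, by simpa using not_lt.2 hk1⟩⟩
  have h0 : (volume : Measure E3) {(0:E3)} = 0 := measure_singleton _
  calc (∫⁻ u in Metric.ball (0 : E3) 1, ENNReal.ofReal ‖u‖⁻¹)
      ≤ ∫⁻ u in {(0:E3)} ∪ ⋃ k, S k, ENNReal.ofReal ‖u‖⁻¹ := lintegral_mono_set hsub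
    _ ≤ (∫⁻ u in {(0:E3)}, ENNReal.ofReal ‖u‖⁻¹) + ∫⁻ u in ⋃ k, S k, ENNReal.ofReal ‖u‖⁻¹ :=
        lintegral_union_le _ _ _
    _ ≤ 0 + ∑' k, ∫⁻ u in S k, ENNReal.ofReal ‖u‖⁻¹ := by
        gcongr
        · exact le_of_eq (setLIntegral_measure_zero _ _ h0)
        · exact lintegral_iUnion_le _ _
    _ ≤ 0 + ∑' k, ENNReal.ofReal (2 * (1/4:ℝ)^k) * V := by
        gcongr with k
        have hb : ∀ u ∈ S k, ENNReal.ofReal ‖u‖⁻¹ ≤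
            ENNReal.ofReal (((1/2:ℝ)^(k+1))⁻¹) := by
          intro u hu
          obtain ⟨_, hu2⟩ := hu
          have hlow : (1/2:ℝ)^(k+1) ≤ ‖u‖ := by
            simpa [dist_eq_norm] using not_lt.1 (fun h => hu2 (by simpa [dist_eq_norm] using h))
          exact ENNReal.ofReal_le_ofReal
            (inv_anti₀ (by positivity) hlow)
        calc (∫⁻ u in S k, ENNReal.ofReal ‖u‖⁻¹)
            ≤ ∫⁻ _ in S k, ENNReal.ofReal (((1/2:ℝ)^(k+1))⁻¹) :=
              setLIntegral_mono measurable_const hb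
          _ = ENNReal.ofReal (((1/2:ℝ)^(k+1))⁻¹) * volume (S k) := by
              rw [lintegral_const, Measure.restrict_apply_univ]
          _ ≤ ENNReal.ofReal (((1/2:ℝ)^(k+1))⁻¹) * volume (Metric.ball (0:E3) ((1/2:ℝ)^k)) := by
              exact mul_le_mul_right (measure_mono Set.diff_subset) _
          _ = ENNReal.ofReal (((1/2:ℝ)^(k+1))⁻¹) * (ENNReal.ofReal (((1/2:ℝ)^k) ^ 3) * V) := by
              rw [Measure.addHaar_ball volume _ (by positivity : (0:ℝ) ≤ (1/2:ℝ)^k), hV]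
              norm_num [finrank_euclideanSpace_fin]
          _ = ENNReal.ofReal (2 * (1/4:ℝ)^k) * V := by
              rw [← mul_assoc, ← ENNReal.ofReal_mul (by positivity), aux_pow_calc]
    _ < ⊤ := by
        rw [zero_add, ENNReal.tsum_mul_right]
        refine ENNReal.mul_lt_top ?_ hVlt
        rw [← ENNReal.ofReal_tsum_of_nonneg (fun k => by positivity)
          (((summable_geometric_of_lt_one (by norm_num) (by norm_num)).mul_left 2))]
        exact ENNReal.ofReal_lt_top


lemma aux_scale {r : ℝ} (hr : 0 < r) :
    (∫⁻ w in Metric.ball (0 : E3) r, ENNReal.ofReal ‖w‖⁻¹)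
      = ENNReal.ofReal (r^2) * ∫⁻ u in Metric.ball (0 : E3) 1, ENNReal.ofReal ‖u‖⁻¹ := by
  set g : E3 → ENNReal := fun w => (Metric.ball (0:E3) r).indicator (fun w => ENNReal.ofReal ‖w‖⁻¹) w with hg
  have hgm : Measurable g := (measurable_norm.inv.ennreal_ofReal).indicator measurableSet_ball
  have hsm : Measurable (fun x : E3 => r • x) := measurable_id.const_smul r
  have hmap := lintegral_map (μ := (volume : Measure E3)) hgm hsm
  rw [Measure.map_addHaar_smul volume hr.ne', lintegral_smul_measure] at hmap
  -- hmap : ofReal |(r ^ finrank)⁻¹| * ∫⁻ g = ∫⁻ x, g (r • x)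
  have hcomp : (fun x : E3 => g (r • x)) =
      fun x => (Metric.ball (0:E3) 1).indicator
        (fun u => ENNReal.ofReal r⁻¹ * ENNReal.ofReal ‖u‖⁻¹) x := by
    funext x
    have hmem : r • x ∈ Metric.ball (0:E3) r ↔ x ∈ Metric.ball (0:E3) 1 := by
      simp only [Metric.mem_ball, dist_eq_norm, sub_zero, norm_smul, Real.norm_eq_abs,
        abs_of_pos hr]
      constructor
      · intro h; nlinarith
      · intro h; nlinarith
    by_cases hx : x ∈ Metric.ball (0:E3) 1
    · rw [Set.indicator_of_mem hx, hg]
      simp only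
      rw [Set.indicator_of_mem (hmem.2 hx)]
      rw [norm_smul, Real.norm_eq_abs, abs_of_pos hr, mul_inv,
        ENNReal.ofReal_mul (by positivity)]
    · rw [Set.indicator_of_notMem hx, hg]
      simp only
      rw [Set.indicator_of_notMem (fun h => hx (hmem.1 h))]
  rw [hcomp] at hmap
  rw [lintegral_indicator measurableSet_ball _, lintegral_indicator measurableSet_ball _, lintegral_const_mul' _ _ ENNReal.ofReal_ne_top]
    at hmap
  have hfin : Module.finrank ℝ (EuclideanSpace ℝ (Fin 3)) = 3 := finrank_euclideanSpace_fin
  rw [hfin] at hmap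
  have h3 : |(r ^ 3)⁻¹| = (r^3)⁻¹ := abs_of_pos (by positivity)
  -- from hmap : ofReal ((r^3)⁻¹) * ∫⁻ g = ofReal r⁻¹ * K
  rw [h3] at hmap
  have := congrArg (fun z => ENNReal.ofReal (r^3) * z) hmap
  rw [smul_eq_mul] at this
  rw [← mul_assoc, ← ENNReal.ofReal_mul (by positivity), mul_inv_cancel₀ (by positivity),
    ENNReal.ofReal_one, one_mul] at this
  rw [this, ← mul_assoc, ← ENNReal.ofReal_mul (by positivity)]
  congr 2
  field_simp

lemma aux_trans (v : E3) {r : ℝ} :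
    (∫⁻ v1 in Metric.ball v r, ENNReal.ofReal ‖v - v1‖⁻¹)
      = ∫⁻ w in Metric.ball (0 : E3) r, ENNReal.ofReal ‖w‖⁻¹ := by
  have hmp : MeasurePreserving (fun t : E3 => v - t) volume volume :=
    Measure.measurePreserving_sub_left volume v
  have hemb : MeasurableEmbedding (fun t : E3 => v - t) :=
    (MeasurableEquiv.subLeft v).measurableEmbedding
  have := hmp.setLIntegral_comp_preimage_emb hemb
    (fun w => ENNReal.ofReal ‖w‖⁻¹) (Metric.ball (0:E3) r)
  have hpre : (fun t : E3 => v - t) ⁻¹' Metric.ball (0:E3) r = Metric.ball v r := by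
    ext x
    simp [Metric.mem_ball, dist_eq_norm, norm_sub_rev x v]
  rw [hpre] at this
  exact this

/-- Decay estimate for the Coulomb-kernel convolution, with constant depending only
on the `L^∞` bound, the mass and the second moment. -/
theorem stmt9 (M m0 m2 : ℝ) (hM : 0 < M) (hm0 : 0 < m0) (hm2 : 0 < m2) :
    ∃ C : ℝ, 0 < C ∧ ∀ f : EuclideanSpace ℝ (Fin 3) → ℝ,
      Measurable f → (∀ v, 0 ≤ f v) → (∀ v, f v ≤ M) →
      Integrable f → (∫ v, f v) ≤ m0 →
      Integrable (fun v => f v * (1 + ‖v‖ ^ 2)) →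
      (∫ v, f v * (1 + ‖v‖ ^ 2)) ≤ m2 →
      ∀ v : EuclideanSpace ℝ (Fin 3), v ≠ 0 →
        ∫⁻ v1, ENNReal.ofReal (f v1 * ‖v - v1‖⁻¹) ≤
          ENNReal.ofReal (C * ‖v‖⁻¹) := by
  set K : ENNReal := ∫⁻ u in Metric.ball (0 : E3) 1, ENNReal.ofReal ‖u‖⁻¹ with hKdef
  have hKlt : K < ⊤ := aux_K_lt_top
  set KT : ℝ := K.toReal with hKT
  have hKT0 : 0 ≤ KT := ENNReal.toReal_nonneg
  refine ⟨2*m0 + 8*M*KT + m2, by positivity, ?_⟩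
  intro f hfm hf0 hfM hfi hfm0 hfi2 hfm2 v hv
  have hn : 0 < ‖v‖ := norm_pos_iff.2 hv
  set n : ℝ := ‖v‖ with hndef
  set r : ℝ := n / (1 + n^2/4) with hrdef
  have hr : 0 < r := by positivity
  -- the three sets
  set A : Set E3 := {x | ‖x‖ < n/2} with hA
  set B : Set E3 := Metric.ball v r with hB
  set Cs : Set E3 := {x | n/2 ≤ ‖x‖ ∧ r ≤ ‖v - x‖} with hCs
  have hcover : (Set.univ : Set E3) = A ∪ (B ∪ Cs) := by
    ext x
    simp only [Set.mem_univ, Set.mem_union, Set.mem_setOf_eq, true_iff, Metric.mem_ball, hA, hB,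
      hCs]
    by_cases h1 : ‖x‖ < n/2
    · exact Or.inl h1
    by_cases h2 : dist x v < r
    · exact Or.inr (Or.inl h2)
    · refine Or.inr (Or.inr ⟨not_lt.1 h1, ?_⟩)
      rw [dist_eq_norm] at h2
      rw [norm_sub_rev]
      exact not_lt.1 h2
  -- mass bound
  have hmass : (∫⁻ x, ENNReal.ofReal (f x)) ≤ ENNReal.ofReal m0 := by
    rw [← ofReal_integral_eq_lintegral_ofReal hfi (Filter.Eventually.of_forall hf0)]
    exact ENNReal.ofReal_le_ofReal hfm0
  have hmass2 : (∫⁻ x, ENNReal.ofReal (f x * (1 + ‖x‖^2))) ≤ ENNReal.ofReal m2 := by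
    rw [← ofReal_integral_eq_lintegral_ofReal hfi2
      (Filter.Eventually.of_forall (fun x => mul_nonneg (hf0 x) (by positivity)))]
    exact ENNReal.ofReal_le_ofReal hfm2
  -- bound on A
  have hAbd : (∫⁻ x in A, ENNReal.ofReal (f x * ‖v - x‖⁻¹)) ≤
      ENNReal.ofReal ((2 * m0) * n⁻¹) := by
    have hpt : ∀ x ∈ A, ENNReal.ofReal (f x * ‖v - x‖⁻¹) ≤
        ENNReal.ofReal (f x * (2 * n⁻¹)) := by
      intro x hx
      have hx' : ‖x‖ < n/2 := hx
      have hlow : n/2 < ‖v - x‖ := by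
        have := norm_sub_norm_le v x
        linarith
      refine ENNReal.ofReal_le_ofReal (mul_le_mul_of_nonneg_left ?_ (hf0 x))
      have h1 : ‖v - x‖⁻¹ ≤ (n/2)⁻¹ := inv_anti₀ (by positivity) hlow.le
      have h2 : (n/2 : ℝ)⁻¹ = 2 * n⁻¹ := by field_simp
      linarith [h1, h2.le]
    calc (∫⁻ x in A, ENNReal.ofReal (f x * ‖v - x‖⁻¹))
        ≤ ∫⁻ x in A, ENNReal.ofReal (f x * (2 * n⁻¹)) :=
          setLIntegral_mono ((hfm.mul_const _).ennreal_ofReal) hpt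
      _ ≤ ∫⁻ x, ENNReal.ofReal (f x * (2 * n⁻¹)) := setLIntegral_le_lintegral _ _
      _ = ∫⁻ x, ENNReal.ofReal (f x) * ENNReal.ofReal (2 * n⁻¹) := by
          congr 1; funext x; rw [ENNReal.ofReal_mul (hf0 x)]
      _ = (∫⁻ x, ENNReal.ofReal (f x)) * ENNReal.ofReal (2 * n⁻¹) :=
          lintegral_mul_const' _ _ ENNReal.ofReal_ne_top
      _ ≤ ENNReal.ofReal m0 * ENNReal.ofReal (2 * n⁻¹) := by gcongr
      _ = ENNReal.ofReal ((2 * m0) * n⁻¹) := by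
          rw [← ENNReal.ofReal_mul hm0.le]; ring_nf
  -- bound on B
  have hr2 : r^2 ≤ 8 * n⁻¹ := by
    have key : n^2 * n ≤ 8 * (1 + n^2/4)^2 := by nlinarith [sq_nonneg (n^2 - 2*n), sq_nonneg n]
    have h8 : (8:ℝ) * n⁻¹ = 8 / n := by ring
    rw [hrdef, div_pow, h8, div_le_div_iff₀ (by positivity) hn]
    linarith
  have hBbd : (∫⁻ x in B, ENNReal.ofReal (f x * ‖v - x‖⁻¹)) ≤
      ENNReal.ofReal ((8 * M * KT) * n⁻¹) := by
    have hpt : ∀ x ∈ B, ENNReal.ofReal (f x * ‖v - x‖⁻¹) ≤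
        ENNReal.ofReal (M * ‖v - x‖⁻¹) := fun x _ =>
      ENNReal.ofReal_le_ofReal (mul_le_mul_of_nonneg_right (hfM x) (by positivity))
    calc (∫⁻ x in B, ENNReal.ofReal (f x * ‖v - x‖⁻¹))
        ≤ ∫⁻ x in B, ENNReal.ofReal (M * ‖v - x‖⁻¹) :=
          setLIntegral_mono
            (((measurable_const.sub measurable_id).norm.inv.const_mul M).ennreal_ofReal) hpt
      _ = ∫⁻ x in B, ENNReal.ofReal M * ENNReal.ofReal ‖v - x‖⁻¹ := by
          congr 1; funext x; rw [ENNReal.ofReal_mul hM.le]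
      _ = ENNReal.ofReal M * ∫⁻ x in B, ENNReal.ofReal ‖v - x‖⁻¹ :=
          lintegral_const_mul' _ _ ENNReal.ofReal_ne_top
      _ = ENNReal.ofReal M * (ENNReal.ofReal (r^2) * K) := by
          rw [hB, aux_trans v, aux_scale hr, hKdef]
      _ = ENNReal.ofReal (M * (r^2 * KT)) := by
          rw [ENNReal.ofReal_mul hM.le, ENNReal.ofReal_mul (by positivity),
            ENNReal.ofReal_toReal hKlt.ne]
      _ ≤ ENNReal.ofReal ((8 * M * KT) * n⁻¹) := by
          refine ENNReal.ofReal_le_ofReal ?_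
          have : r^2 * KT ≤ (8 * n⁻¹) * KT := mul_le_mul_of_nonneg_right hr2 hKT0
          calc M * (r^2 * KT) ≤ M * ((8 * n⁻¹) * KT) :=
                mul_le_mul_of_nonneg_left this hM.le
            _ = (8 * M * KT) * n⁻¹ := by ring
  -- bound on Cs
  have hc_eq : (1 + n^2/4)⁻¹ * r⁻¹ = n⁻¹ := by
    rw [hrdef]
    field_simp
  have hCbd : (∫⁻ x in Cs, ENNReal.ofReal (f x * ‖v - x‖⁻¹)) ≤
      ENNReal.ofReal (m2 * n⁻¹) := by
    have hpt : ∀ x ∈ Cs, ENNReal.ofReal (f x * ‖v - x‖⁻¹) ≤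
        ENNReal.ofReal ((f x * (1 + ‖x‖^2)) * n⁻¹) := by
      intro x hx
      obtain ⟨hx1, hx2⟩ := hx
      refine ENNReal.ofReal_le_ofReal ?_
      have hinv : ‖v - x‖⁻¹ ≤ r⁻¹ := inv_anti₀ hr hx2
      have hx1' : n^2/4 ≤ ‖x‖^2 := by nlinarith [hx1, hn]
      have hfac : 1 ≤ (1 + ‖x‖^2) * (1 + n^2/4)⁻¹ := by
        rw [← div_eq_mul_inv, le_div_iff₀ (by positivity)]
        linarith
      calc f x * ‖v - x‖⁻¹ ≤ f x * r⁻¹ := mul_le_mul_of_nonneg_left hinv (hf0 x)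
        _ ≤ (f x * ((1 + ‖x‖^2) * (1 + n^2/4)⁻¹)) * r⁻¹ := by
            refine mul_le_mul_of_nonneg_right ?_ (by positivity)
            exact le_mul_of_one_le_right (hf0 x) hfac
        _ = (f x * (1 + ‖x‖^2)) * n⁻¹ := by
            rw [← hc_eq]; ring
    calc (∫⁻ x in Cs, ENNReal.ofReal (f x * ‖v - x‖⁻¹))
        ≤ ∫⁻ x in Cs, ENNReal.ofReal ((f x * (1 + ‖x‖^2)) * n⁻¹) :=
          setLIntegral_mono
            (((hfm.mul ((measurable_const.add (measurable_norm.pow_const 2)))).mul_const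
              _).ennreal_ofReal) hpt
      _ ≤ ∫⁻ x, ENNReal.ofReal ((f x * (1 + ‖x‖^2)) * n⁻¹) := setLIntegral_le_lintegral _ _
      _ = (∫⁻ x, ENNReal.ofReal (f x * (1 + ‖x‖^2))) * ENNReal.ofReal n⁻¹ := by
          rw [← lintegral_mul_const' _ _ ENNReal.ofReal_ne_top]
          congr 1; funext x
          rw [ENNReal.ofReal_mul (mul_nonneg (hf0 x) (by positivity))]
      _ ≤ ENNReal.ofReal m2 * ENNReal.ofReal n⁻¹ := by gcongr
      _ = ENNReal.ofReal (m2 * n⁻¹) := by rw [← ENNReal.ofReal_mul hm2.le]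
  -- combine
  calc (∫⁻ v1, ENNReal.ofReal (f v1 * ‖v - v1‖⁻¹))
      = ∫⁻ v1 in Set.univ, ENNReal.ofReal (f v1 * ‖v - v1‖⁻¹) := (setLIntegral_univ _).symm
    _ = ∫⁻ v1 in A ∪ (B ∪ Cs), ENNReal.ofReal (f v1 * ‖v - v1‖⁻¹) := by rw [← hcover]
    _ ≤ (∫⁻ v1 in A, ENNReal.ofReal (f v1 * ‖v - v1‖⁻¹)) +
        ∫⁻ v1 in B ∪ Cs, ENNReal.ofReal (f v1 * ‖v - v1‖⁻¹) := lintegral_union_le _ _ _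
    _ ≤ (∫⁻ v1 in A, ENNReal.ofReal (f v1 * ‖v - v1‖⁻¹)) +
        ((∫⁻ v1 in B, ENNReal.ofReal (f v1 * ‖v - v1‖⁻¹)) +
          ∫⁻ v1 in Cs, ENNReal.ofReal (f v1 * ‖v - v1‖⁻¹)) :=
        add_le_add_right (lintegral_union_le _ _ _) _
    _ ≤ ENNReal.ofReal ((2 * m0) * n⁻¹) +
        (ENNReal.ofReal ((8 * M * KT) * n⁻¹) + ENNReal.ofReal (m2 * n⁻¹)) := by
        gcongr
    _ = ENNReal.ofReal ((2*m0 + 8*M*KT + m2) * n⁻¹) := by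
        rw [← ENNReal.ofReal_add (by positivity) (by positivity),
          ← ENNReal.ofReal_add (by positivity) (by positivity)]
        ring_nf
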